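/- Let q be a prime power with q ≢ 3 (mod 4), s ≥ 2, and q - 1 = p_1^{α_1}⋯p_s^{α_s}. For any T > 1, Σ_{t≤T} N_q(t) > (φ(q-1)/(s!·log p_1 ⋯ log p_s)) · (log T)^s · (1 + s·log(rad(q-1)/p_1)/(2 log T)). -/

import Mathlib

open Polynomial Filter Asymptotics

/-- `Nbin F t` is the number of monic irreducible binomials `x^t - a` in `F[x]`. -/
noncomputable def Nbin (F : Type*) [Field F] [Fintype F] (t : ℕ) : ℕ :=
  Nat.card {a : Fˣ // Irreducible (X ^ t - C (a : F))}

open Finset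


-- pairing lemma
lemma bin_pair_pow {u v : ℝ} (hu : 0 ≤ u) (huv : u ≤ v) (k i : ℕ) (hik : i ≤ k) :
    v ^ i * u ^ (k - i) + v ^ (k - i) * u ^ i ≤ v ^ k + u ^ k := by
  have h1 : (0:ℝ) ≤ (v ^ i - u ^ i) * (v ^ (k-i) - u ^ (k-i)) :=
    mul_nonneg (by nlinarith [pow_le_pow_left₀ hu huv i]) (by nlinarith [pow_le_pow_left₀ hu huv (k-i)])
  have h2 : v ^ i * v ^ (k - i) = v ^ k := by rw [← pow_add]; congr 1; omega
  have h3 : u ^ i * u ^ (k - i) = u ^ k := by rw [← pow_add]; congr 1; omega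
  nlinarith

lemma bin_geom_bound {u v : ℝ} (hu : 0 ≤ u) (huv : u ≤ v) (k : ℕ) :
    2 * (v ^ (k+1) - u ^ (k+1)) ≤ (k+1) * (v - u) * (v ^ k + u ^ k) := by
  have hgeom : (∑ i ∈ range (k+1), v ^ i * u ^ (k - i)) * (v - u) = v ^ (k+1) - u ^ (k+1) := by
    simpa using Commute.geom_sum₂_mul (Commute.all v u) (k+1)
  have hsum : 2 * ∑ i ∈ range (k+1), v ^ i * u ^ (k - i) ≤ (k+1) * (v ^ k + u ^ k) := by
    have := Finset.sum_range_reflect (fun i => v ^ i * u ^ (k - i)) (k+1)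
    calc 2 * ∑ i ∈ range (k+1), v ^ i * u ^ (k - i)
        = ∑ i ∈ range (k+1), (v ^ i * u ^ (k - i) + v ^ (k - i) * u ^ i) := by
          rw [Finset.sum_add_distrib, two_mul]
          congr 1
          rw [← this]
          apply Finset.sum_congr rfl
          intro i hi
          simp only [mem_range] at hi
          have e1 : k + 1 - 1 - i = k - i := by omega
          have e2 : k - (k - i) = i := by omega
          rw [e1, e2]
      _ ≤ ∑ i ∈ range (k+1), (v ^ k + u ^ k) := by
          apply Finset.sum_le_sum
          intro i hi
          simp only [mem_range] at hi
          exact bin_pair_pow hu huv k i (by omega)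
      _ = (k+1) * (v ^ k + u ^ k) := by simp [Finset.sum_const, card_range]; ring
  nlinarith [sub_nonneg.mpr huv, hgeom]

-- star lemma
lemma bin_star_sum (k : ℕ) (b r : ℝ) (hb : 0 < b) (hr : 0 ≤ r) (n : ℕ) :
    (((n:ℝ)*b + r)^(k+1) - r^(k+1))/((k+1)*b) + (((n:ℝ)*b+r)^k + r^k)/2
      ≤ ∑ m ∈ range (n+1), ((m:ℝ)*b + r)^k := by
  induction n with
  | zero => simp
  | succ n ih =>
    rw [Finset.sum_range_succ]
    set u : ℝ := (n:ℝ)*b + r with hu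
    have hvu : ((n:ℝ)+1)*b + r = u + b := by rw [hu]; ring
    push_cast
    rw [hvu]
    have hu0 : 0 ≤ u := by positivity
    have huv : u ≤ u + b := by linarith
    have hg := bin_geom_bound hu0 huv k
    have hk1 : (0:ℝ) < (k:ℝ)+1 := by positivity
    have key : ((u+b)^(k+1) - u^(k+1))/((k+1)*b) + ((u+b)^k - u^k)/2 ≤ (u+b)^k := by
      have h2 : ((u+b)^(k+1) - u^(k+1))/(((k:ℝ)+1)*b) ≤ ((u+b)^k + u^k)/2 := by
        rw [div_le_div_iff₀ (by positivity) two_pos]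
        nlinarith
      linarith
    have expand : ((u+b)^(k+1) - r^(k+1))/((k+1)*b) + ((u+b)^k + r^k)/2
        = ((u^(k+1) - r^(k+1))/((k+1)*b) + (u^k + r^k)/2)
          + (((u+b)^(k+1) - u^(k+1))/((k+1)*b) + ((u+b)^k - u^k)/2) := by ring
    rw [expand]
    linarith [ih]

lemma bin_core (K b r S' P0 P1 P2 q0 q1 q2 T1 T2 : ℝ)
    (hK : 0 ≤ K) (hK1 : K = 0 ∨ 1 ≤ K) (hb : 0 < b) (hr : 0 ≤ r) (hrb : r ≤ b) (hS : 0 ≤ S')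
    (hS0 : K = 0 → S' = 0)
    (hq0 : 0 ≤ q0) (hq1 : q1 = q0 * r) (hq2 : q2 = q1 * r) (hP0 : 0 ≤ P0)
    (h1 : (P2 - q2)*2 + (P1 + q1)*((K+2)*b) ≤ T1*(2*(K+2)*b))
    (h2 : (P1 - q1)*2 + (P0 + q0)*((K+1)*b) ≤ T2*(2*(K+1)*b)) :
    P2 + (K+2)/2*P1*(S'+b) ≤ (T1 + (K+1)/2*S'*T2)*((K+2)*b) := by
  have hq1' : 0 ≤ q1 := by rw [hq1]; positivity
  have e1 : q2 ≤ q1 * b := by rw [hq2]; nlinarith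
  have e2 : S' * (2 * q1) ≤ S' * ((K+1) * q0 * b) := by
    rcases hK1 with h | h
    · simp [hS0 h]
    · have : 2 * q1 ≤ (K+1) * q0 * b := by
        rw [hq1]
        nlinarith [mul_le_mul_of_nonneg_left hrb (by positivity : (0:ℝ) ≤ 2*q0),
          mul_nonneg (mul_nonneg (sub_nonneg.mpr h) hq0) hb.le]
      exact mul_le_mul_of_nonneg_left this hS
  have f1 : 2*(K+1) * ((P2 - q2)*2 + (P1 + q1)*((K+2)*b)) ≤ 2*(K+1) * (T1*(2*(K+2)*b)) :=
    mul_le_mul_of_nonneg_left h1 (by positivity)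
  have f2 : (S'*(K+2)*(K+1)) * ((P1 - q1)*2 + (P0 + q0)*((K+1)*b))
      ≤ (S'*(K+2)*(K+1)) * (T2*(2*(K+1)*b)) :=
    mul_le_mul_of_nonneg_left h2 (by positivity)
  have g1 : 4*(K+1)*q2 ≤ 2*(K+2)*b*q1*(K+1) := by
    nlinarith [mul_le_mul_of_nonneg_left e1 (show (0:ℝ) ≤ 4*(K+1) by positivity),
      mul_nonneg (mul_nonneg (mul_nonneg hK (show (0:ℝ) ≤ K+1 by positivity)) hb.le) hq1']
  have g2 : (K+2)*(K+1) * (S' * (2*q1)) ≤ (K+2)*(K+1) * (S' * ((K+1) * q0 * b)) :=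
    mul_le_mul_of_nonneg_left e2 (by positivity)
  have g3 : (0:ℝ) ≤ S'*(K+2)*(K+1)*b*P0 := by positivity
  have goal4 : 4*(K+1) * (P2 + (K+2)/2*P1*(S'+b)) ≤ 4*(K+1) * ((T1 + (K+1)/2*S'*T2)*((K+2)*b)) := by
    nlinarith [f1, f2, g1, g2, g3]
  have h4 : (0:ℝ) < 4*(K+1) := by positivity
  exact le_of_mul_le_mul_left goal4 h4

noncomputable def binC (s : ℕ) (a : Fin s → ℝ) (A : ℝ) : Finset (Fin s → ℕ) :=
  @Finset.filter _ (fun x => ∑ j, (x j : ℝ) * a j ≤ A) (Classical.decPred _)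
    (Fintype.piFinset fun j => Finset.range (⌊A / a j⌋₊ + 1))

lemma bin_mem_binC {s : ℕ} {a : Fin s → ℝ} (ha : ∀ j, 0 < a j) {A : ℝ} (x : Fin s → ℕ) :
    x ∈ binC s a A ↔ ∑ j, (x j : ℝ) * a j ≤ A := by
  classical
  simp only [binC, Finset.mem_filter, Fintype.mem_piFinset, Finset.mem_range]
  constructor
  · exact fun h => h.2
  · intro h
    refine ⟨fun j => ?_, h⟩
    have h1 : (x j : ℝ) * a j ≤ A := by
      refine le_trans (Finset.single_le_sum (f := fun j => (x j : ℝ) * a j) ?_ (Finset.mem_univ j)) h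
      intro i _
      exact mul_nonneg (Nat.cast_nonneg _) (ha i).le
    have h2 : (x j : ℝ) ≤ A / a j := (le_div_iff₀ (ha j)).mpr h1
    have := Nat.le_floor h2
    omega

lemma bin_card_rec (s : ℕ) (a : Fin (s+1) → ℝ) (ha : ∀ j, 0 < a j) (A : ℝ) :
    (binC (s+1) a A).card =
      ∑ m ∈ Finset.range (⌊A / a (Fin.last s)⌋₊ + 1),
        (binC s (a ∘ Fin.castSucc) (A - m * a (Fin.last s))).card := by
  classical
  set b := a (Fin.last s) with hbdef
  have hb : 0 < b := ha _
  rw [Finset.card_eq_sum_card_fiberwise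
    (f := fun x : Fin (s+1) → ℕ => x (Fin.last s))
    (t := Finset.range (⌊A / b⌋₊ + 1)) ?_]
  · apply Finset.sum_congr rfl
    intro m _
    apply Finset.card_bij' (fun x _ => x ∘ Fin.castSucc) (fun y _ => Fin.snoc y m)
    · intro x hx
      simp only [Finset.mem_filter] at hx
      obtain ⟨hx1, hx2⟩ := hx
      rw [bin_mem_binC ha] at hx1
      rw [bin_mem_binC (a := a ∘ Fin.castSucc) (fun j => ha _)]
      rw [Fin.sum_univ_castSucc] at hx1
      simp only [Function.comp_apply]
      rw [hx2] at hx1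
      linarith
    · intro y hy
      rw [bin_mem_binC (a := a ∘ Fin.castSucc) (fun j => ha _)] at hy
      simp only [Finset.mem_filter]
      constructor
      · rw [bin_mem_binC ha, Fin.sum_univ_castSucc]
        simp only [Fin.snoc_castSucc, Fin.snoc_last]
        simp only [Function.comp_apply] at hy
        linarith
      · simp [Fin.snoc_last]
    · intro x hx
      simp only [Finset.mem_filter] at hx
      rw [← hx.2]
      exact Fin.snoc_init_self x
    · intro y _
      funext j
      simp [Fin.snoc_castSucc]
  · intro x hx
    rw [Finset.mem_coe, bin_mem_binC ha] at hx
    simp only [Finset.mem_coe, Finset.mem_range]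
    have h1 : (x (Fin.last s) : ℝ) * b ≤ A := by
      refine le_trans (Finset.single_le_sum (f := fun j => (x j : ℝ) * a j) ?_ (Finset.mem_univ _)) hx
      intro i _
      have := ha i
      positivity
    have h2 : (x (Fin.last s) : ℝ) ≤ A / b := (le_div_iff₀ hb).mpr h1
    have := Nat.le_floor h2
    omega

lemma bin_card_zero (a : Fin 0 → ℝ) (A : ℝ) (hA : 0 ≤ A) : (binC 0 a A).card = 1 := by
  classical
  rw [Finset.card_eq_one]
  refine ⟨fun i => i.elim0, ?_⟩
  ext x
  rw [bin_mem_binC (fun j => j.elim0), Finset.mem_singleton]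
  simp only [Finset.univ_eq_empty, Finset.sum_empty]
  constructor
  · intro _
    funext i
    exact i.elim0
  · intro _
    exact hA
lemma bin_star_sum2 (k n : ℕ) (b r : ℝ) (hb : 0 < b) (hr : 0 ≤ r) :
    (((n:ℝ)*b + r)^(k+1) - r^(k+1))*2 + (((n:ℝ)*b+r)^k + r^k)*(((k:ℝ)+1)*b)
      ≤ (∑ m ∈ range (n+1), ((m:ℝ)*b + r)^k) * (2*((k:ℝ)+1)*b) := by
  have h := bin_star_sum k b r hb hr n
  have hpos : (0:ℝ) ≤ 2*((k:ℝ)+1)*b := by positivity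
  have h2 := mul_le_mul_of_nonneg_right h hpos
  have hne : ((k:ℝ)+1)*b ≠ 0 := by positivity
  have hXc : ((((n:ℝ)*b + r)^(k+1) - r^(k+1))/(((k:ℝ)+1)*b)) * (((k:ℝ)+1)*b)
      = (((n:ℝ)*b + r)^(k+1) - r^(k+1)) := div_mul_cancel₀ _ hne
  nlinarith [h2, hXc]

lemma bin_filter_sum {m : ℕ} (hm : 0 < m) (f : Fin m → ℝ) :
    ∑ j ∈ Finset.univ.filter (fun j : Fin m => (j:ℕ) ≠ 0), f j = (∑ j, f j) - f ⟨0, hm⟩ := by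
  rw [eq_sub_iff_add_eq]
  have hsplit := Finset.sum_filter_add_sum_filter_not Finset.univ (fun j : Fin m => (j:ℕ) ≠ 0) f
  have hneg : Finset.univ.filter (fun j : Fin m => ¬ (j:ℕ) ≠ 0) = {(⟨0, hm⟩ : Fin m)} := by
    ext j
    simp [Fin.ext_iff]
  rw [hneg, Finset.sum_singleton] at hsplit
  exact hsplit

lemma bin_lattice : ∀ (s : ℕ), 1 ≤ s → ∀ (a : Fin s → ℝ), (∀ j, 0 < a j) → ∀ A : ℝ, 0 ≤ A →
    (A^s + (s:ℝ)/2 * A^(s-1) * ∑ j ∈ Finset.univ.filter (fun j : Fin s => (j:ℕ) ≠ 0), a j) / ((s.factorial : ℝ) * ∏ j, a j)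
      < ((binC s a A).card : ℝ) := by
  intro s hs
  induction s, hs using Nat.le_induction with
  | base =>
    intro a ha A hA
    have hb : 0 < a 0 := ha 0
    have herase : (Finset.univ.filter (fun j : Fin 1 => (j:ℕ) ≠ 0)) = ∅ := by decide
    have hprod : (∏ j, a j) = a 0 := by
      rw [Fin.prod_univ_one]
    rw [herase, hprod]
    simp only [Finset.sum_empty, mul_zero, add_zero, pow_one, Nat.factorial_one, Nat.cast_one,
      one_mul]
    have hrec := bin_card_rec 0 a ha A
    have hlast : Fin.last 0 = 0 := rfl
    rw [hlast] at hrec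
    have hone : ∀ m ∈ range (⌊A / a 0⌋₊ + 1), (binC 0 (a ∘ Fin.castSucc) (A - m * a 0)).card = 1 := by
      intro m hm
      apply bin_card_zero
      simp only [mem_range] at hm
      have h1 : (m : ℝ) ≤ ⌊A / a 0⌋₊ := by exact_mod_cast Nat.lt_succ_iff.mp hm
      have h2 : (⌊A / a 0⌋₊ : ℝ) ≤ A / a 0 := Nat.floor_le (by positivity)
      have h3 : (m:ℝ) * a 0 ≤ A := by
        rw [← le_div_iff₀ hb]; linarith
      linarith
    rw [hrec, Finset.sum_congr rfl hone, Finset.sum_const, card_range, smul_eq_mul, mul_one]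
    push_cast
    calc A / a 0 < ⌊A / a 0⌋₊ + 1 := Nat.lt_floor_add_one _
      _ = _ := by norm_num
  | succ s hs IH =>
    intro a ha A hA
    set b := a (Fin.last s) with hbdef
    have hb : 0 < b := ha _
    set a' : Fin s → ℝ := a ∘ Fin.castSucc with ha'def
    have ha' : ∀ j, 0 < a' j := fun j => ha _
    set n := ⌊A / b⌋₊ with hndef
    set r := A - n * b with hrdef
    have hA' : A = (n:ℝ) * b + r := by rw [hrdef]; ring
    have hr : 0 ≤ r := by
      have h2 : (n:ℝ) ≤ A / b := Nat.floor_le (by positivity)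
      have : (n:ℝ) * b ≤ A := by rw [← le_div_iff₀ hb]; linarith
      rw [hrdef]; linarith
    have hrb : r ≤ b := by
      have h2 : A / b < (n:ℝ) + 1 := Nat.lt_floor_add_one _
      have : A < ((n:ℝ) + 1) * b := by
        rw [← div_lt_iff₀ hb]; linarith
      rw [hrdef]; nlinarith
    obtain ⟨k, rfl⟩ : ∃ k, s = k + 1 := ⟨s - 1, by omega⟩
    set S' : ℝ := ∑ j ∈ Finset.univ.filter (fun j : Fin (k+1) => (j:ℕ) ≠ 0), a' j with hS'def
    set P' : ℝ := ∏ j, a' j with hP'def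
    have hP' : 0 < P' := Finset.prod_pos (fun j _ => ha' j)
    have hS' : 0 ≤ S' := Finset.sum_nonneg (fun j _ => (ha' j).le)
    set F1 : ℝ := ((k+1).factorial : ℝ) * P' with hF1def
    have hF1 : 0 < F1 := by
      rw [hF1def]
      have : (0:ℝ) < ((k+1).factorial : ℝ) := by exact_mod_cast (k+1).factorial_pos
      positivity
    -- sum over erase and product relations
    have hSsum : ∑ j ∈ Finset.univ.filter (fun j : Fin (k+2) => (j:ℕ) ≠ 0), a j = S' + b := by
      have h1 := bin_filter_sum (by omega : 0 < k+2) a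
      have h2 := bin_filter_sum (by omega : 0 < k+1) a'
      rw [← hS'def] at h2
      have h3 : (∑ j : Fin (k+2), a j) = (∑ j, a' j) + b := by
        rw [Fin.sum_univ_castSucc]; rfl
      have h4 : a' ⟨0, by omega⟩ = a ⟨0, by omega⟩ := by
        rw [ha'def]
        simp only [Function.comp_apply]
        congr 1
      rw [h1, h3, ← h4, h2]; ring
    have hPprod : ∏ j : Fin (k+2), a j = P' * b := by
      rw [hP'def, Fin.prod_univ_castSucc]; rfl
    have hfact : (((k+2)).factorial : ℝ) = ((k:ℝ)+2) * ((k+1).factorial : ℝ) := by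
      rw [Nat.factorial_succ (k+1)]; push_cast; ring
    -- recursion
    have hrec := bin_card_rec (k+1) a ha A
    have hAm : ∀ m ∈ range (n+1), 0 ≤ A - (m:ℝ) * b := by
      intro m hm
      simp only [mem_range] at hm
      have h1 : (m:ℝ) ≤ (n:ℝ) := by exact_mod_cast Nat.lt_succ_iff.mp hm
      nlinarith
    -- IH applied
    set g : ℝ → ℝ := fun B => (B^(k+1) + ((k:ℝ)+1)/2 * B^k * S') / F1 with hgdef
    have hIH : ∀ m ∈ range (n+1),
        g (A - (m:ℝ)*b) < ((binC (k+1) a' (A - (m:ℝ)*b)).card : ℝ) := by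
      intro m hm
      have h0 := IH a' ha' (A - (m:ℝ)*b) (hAm m hm)
      have hk1 : (k+1) - 1 = k := by omega
      rw [hk1] at h0
      push_cast at h0
      rw [hgdef]
      simp only []
      rw [hF1def, hP'def, hS'def]
      convert h0 using 3
    have hsumlt : ∑ m ∈ range (n+1), g (A - (m:ℝ)*b)
        < ((binC (k+2) a A).card : ℝ) := by
      rw [← ha'def, ← hbdef] at hrec
      rw [hrec]
      push_cast
      exact Finset.sum_lt_sum_of_nonempty ⟨0, Finset.mem_range.mpr (by omega)⟩ hIH
    have hre : ∑ m ∈ range (n+1), g (A - (m:ℝ)*b) = ∑ m ∈ range (n+1), g ((m:ℝ)*b + r) := by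
      rw [← Finset.sum_range_reflect (fun m => g ((m:ℝ)*b + r)) (n+1)]
      apply Finset.sum_congr rfl
      intro j hj
      simp only [mem_range] at hj
      congr 1
      have h1 : ((n + 1 - 1 - j : ℕ) : ℝ) = (n:ℝ) - j := by
        have : n + 1 - 1 - j = n - j := by omega
        rw [this, Nat.cast_sub (by omega)]
      rw [h1, hA']; ring
    set SS1 : ℝ := ∑ m ∈ range (n+1), ((m:ℝ)*b + r)^(k+1) with hSS1def
    set SS2 : ℝ := ∑ m ∈ range (n+1), ((m:ℝ)*b + r)^k with hSS2def
    have hexpand : ∑ m ∈ range (n+1), g ((m:ℝ)*b + r) = (SS1 + ((k:ℝ)+1)/2 * S' * SS2) / F1 := by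
      rw [hgdef]
      simp only []
      rw [hSS1def, hSS2def, ← Finset.sum_div]
      congr 1
      rw [Finset.sum_add_distrib]
      congr 1
      rw [Finset.mul_sum]
      apply Finset.sum_congr rfl
      intro m _
      ring
    -- core inequality, via bin_core
    have hK : 0 ≤ (k:ℝ) := by positivity
    have hK1 : (k:ℝ) = 0 ∨ 1 ≤ (k:ℝ) := by
      rcases Nat.eq_zero_or_pos k with h | h
      · left; rw [h]; norm_num
      · right; exact_mod_cast h
    have hS0 : (k:ℝ) = 0 → S' = 0 := by
      intro h
      have hk0 : k = 0 := by exact_mod_cast h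
      subst hk0
      rw [hS'def]
      have : (Finset.univ.filter (fun j : Fin 1 => (j:ℕ) ≠ 0)) = ∅ := by decide
      rw [this, Finset.sum_empty]
    have h1 : (A^(k+2) - r^(k+2))*2 + (A^(k+1) + r^(k+1))*(((k:ℝ)+2)*b) ≤ SS1*(2*((k:ℝ)+2)*b) := by
      have h := bin_star_sum2 (k+1) n b r hb hr
      push_cast at h
      rw [hSS1def, hA']
      convert h using 1 <;> ring
    have h2 : (A^(k+1) - r^(k+1))*2 + (A^k + r^k)*(((k:ℝ)+1)*b) ≤ SS2*(2*((k:ℝ)+1)*b) := by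
      have h := bin_star_sum2 k n b r hb hr
      rw [hSS2def, hA']
      convert h using 1 <;> ring
    have hcore := bin_core (k:ℝ) b r S' (A^k) (A^(k+1)) (A^(k+2)) (r^k) (r^(k+1)) (r^(k+2)) SS1 SS2
      hK hK1 hb hr hrb hS' hS0 (by positivity) (by rw [pow_succ]) (by rw [pow_succ])
      (by positivity) h1 h2
    -- final assembly
    have hfactpos : (0:ℝ) < ((k+2).factorial : ℝ) := by exact_mod_cast (k+2).factorial_pos
    have htarget : (A^(k+2) + ((k:ℝ)+2)/2 * A^(k+1) * (S' + b)) / (((k+2).factorial : ℝ) * (P' * b))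
        ≤ (SS1 + ((k:ℝ)+1)/2 * S' * SS2) / F1 := by
      rw [div_le_div_iff₀ (by exact mul_pos hfactpos (mul_pos hP' hb)) hF1]
      rw [hfact, hF1def]
      have hmul := mul_le_mul_of_nonneg_right hcore (le_of_lt (mul_pos
        (show (0:ℝ) < ((k+1).factorial : ℝ) by exact_mod_cast (k+1).factorial_pos) hP'))
      calc (A^(k+2) + ((k:ℝ)+2)/2 * A^(k+1) * (S' + b)) * (((k+1).factorial : ℝ) * P')
          = (A^(k+2) + ((k:ℝ)+2)/2 * A^(k+1) * (S' + b)) * (((k+1).factorial : ℝ) * P') := rfl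
        _ ≤ ((SS1 + ((k:ℝ)+1)/2 * S' * SS2) * (((k:ℝ)+2)*b)) * (((k+1).factorial : ℝ) * P') := hmul
        _ = (SS1 + ((k:ℝ)+1)/2 * S' * SS2) * (((k:ℝ)+2) * ((k+1).factorial : ℝ) * (P' * b)) := by
            ring
    have hk21 : (k+2) - 1 = k+1 := by omega
    rw [hk21, hSsum, hPprod]
    push_cast
    have hchain : (A^(k+2) + ((k:ℝ)+2)/2 * A^(k+1) * (S' + b)) / (((k+2).factorial : ℝ) * (P' * b))
        < ((binC (k+2) a A).card : ℝ) :=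
      calc (A^(k+2) + ((k:ℝ)+2)/2 * A^(k+1) * (S' + b)) / (((k+2).factorial : ℝ) * (P' * b))
          ≤ (SS1 + ((k:ℝ)+1)/2 * S' * SS2) / F1 := htarget
        _ = ∑ m ∈ range (n+1), g ((m:ℝ)*b + r) := hexpand.symm
        _ = ∑ m ∈ range (n+1), g (A - (m:ℝ)*b) := hre.symm
        _ < ((binC (k+2) a A).card : ℝ) := hsumlt
    have heq : (A^(k+1+1) + ((k:ℝ)+1+1)/2 * A^(k+1) * (S' + b)) / (((k+1+1).factorial : ℝ) * (P' * b))
        = (A^(k+2) + ((k:ℝ)+2)/2 * A^(k+1) * (S' + b)) / (((k+2).factorial : ℝ) * (P' * b)) := by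
      rw [show k+1+1 = k+2 from rfl]
      ring
    rw [heq]
    exact hchain
open Polynomial IntermediateField

universe u

-- norm of the generator of K(x) where minpoly x = X^n - C a
lemma bin_norm_gen {K : Type u} [Field K] {E : Type u} [Field E] [Algebra K E]
    (x : E) (n : ℕ) (hn : 0 < n) (a : K) (hx : minpoly K x = X^n - C a)
    (hint : IsIntegral K x) :
    Algebra.norm K (AdjoinSimple.gen K x) = (-1)^n * (-a) := by
  rw [← IntermediateField.adjoin.powerBasis_gen hint,
    Algebra.PowerBasis.norm_gen_eq_coeff_zero_minpoly]
  simp [minpoly_gen, hx, hn.ne']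
  rw [if_neg (by omega : ¬ 0 = n)]
  ring

-- the 2-power case over finite fields with card ≡ 1 mod 4
lemma bin_irred_two_pow : ∀ (k : ℕ) (K : Type u) [Field K] [Fintype K],
    Fintype.card K % 4 = 1 → ∀ a : K, (∀ b : K, b^2 ≠ a) → Irreducible (X^(2^k) - C a) := by
  intro k
  induction k with
  | zero =>
    intro K _ _ _ a _
    simpa using irreducible_X_sub_C a
  | succ k IH =>
    intro K _ _ hcard a ha
    have h2 : (2:ℕ)^(k+1) = 2^k * 2 := by ring
    rw [h2]
    apply X_pow_mul_sub_C_irreducible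
      (X_pow_sub_C_irreducible_of_prime Nat.prime_two ha)
    intro E _ _ x hx
    have hint : IsIntegral K x := not_not.mp fun h ↦ by
      simpa only [degree_zero, degree_X_pow_sub_C two_pos,
        WithBot.natCast_ne_bot] using congr_arg degree (hx.symm.trans (dif_neg h))
    have hfd : FiniteDimensional K K⟮x⟯ := IntermediateField.adjoin.finiteDimensional hint
    have hfin : Finite K⟮x⟯ := Module.finite_of_finite K
    letI : Fintype K⟮x⟯ := Fintype.ofFinite _
    have hrank : Module.finrank K K⟮x⟯ = 2 := by
      rw [IntermediateField.adjoin.finrank hint, hx, natDegree_X_pow_sub_C]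
    have hcard2 : Fintype.card K⟮x⟯ = (Fintype.card K)^2 := by
      rw [Module.card_eq_pow_finrank (K := K) (V := K⟮x⟯), hrank]
    have hcard4 : Fintype.card K⟮x⟯ % 4 = 1 := by
      rw [hcard2, Nat.pow_mod, hcard]
    apply IH K⟮x⟯ hcard4
    intro b hb
    have hnorm : Algebra.norm K (AdjoinSimple.gen K x) = (-1:K)^2 * (-a) :=
      bin_norm_gen x 2 two_pos a hx hint
    have hb2 : (Algebra.norm K b)^2 = -a := by
      rw [← map_pow, hb, hnorm]; ring
    obtain ⟨i, hi⟩ : IsSquare (-1 : K) := by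
      rw [FiniteField.isSquare_neg_one_iff, hcard]
      omega
    exact ha (i * Algebra.norm K b) (by rw [mul_pow]; linear_combination (i*i) * hb2 + a * hi)

lemma bin_irred_main (K : Type u) [Field K] [Fintype K] (t : ℕ) (ht : 0 < t)
    (hmod : Even t → Fintype.card K % 4 = 1)
    (a : K) (ha : ∀ ℓ : ℕ, ℓ.Prime → ℓ ∣ t → ∀ b : K, b ^ ℓ ≠ a) :
    Irreducible (X ^ t - C a) := by
  rcases Nat.even_or_odd t with hev | hodd
  swap
  · exact X_pow_sub_C_irreducible_of_odd hodd ha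
  · set k := t.factorization 2 with hkdef
    set m := t / 2^k with hmdef
    have hk1 : 1 ≤ k := by
      rw [hkdef]
      exact (Nat.Prime.factorization_pos_of_dvd Nat.prime_two ht.ne' hev.two_dvd)
    have h2m : ¬ (2 ∣ m) := Nat.not_dvd_ordCompl Nat.prime_two ht.ne'
    have hmodd : Odd m := Nat.odd_iff.mpr (by omega)
    have hmt : t = m * 2^k := by
      rw [hmdef, hkdef, mul_comm]
      exact (Nat.ordProj_mul_ordCompl_eq_self t 2).symm
    rw [hmt]
    have h2k : Irreducible (X^(2^k) - C a) :=
      bin_irred_two_pow k K (hmod hev) a (fun b => ha 2 Nat.prime_two hev.two_dvd b)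
    apply X_pow_mul_sub_C_irreducible h2k
    intro E _ _ x hx
    have h2kpos : 0 < 2^k := pow_pos two_pos k
    have hint : IsIntegral K x := not_not.mp fun h ↦ by
      simpa only [degree_zero, degree_X_pow_sub_C h2kpos,
        WithBot.natCast_ne_bot] using congr_arg degree (hx.symm.trans (dif_neg h))
    apply X_pow_sub_C_irreducible_of_odd hmodd
    intro l hl hlm b hb
    have hl2 : l ≠ 2 := by
      rintro rfl
      exact h2m hlm
    have hlodd : Odd l := hl.odd_of_ne_two hl2
    have hev2k : Even (2^k) := (Nat.even_pow).mpr ⟨even_two, by omega⟩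
    have hnorm : Algebra.norm K (AdjoinSimple.gen K x) = (-1:K)^(2^k) * (-a) :=
      bin_norm_gen x (2^k) h2kpos a hx hint
    have hbn : (Algebra.norm K b)^l = -a := by
      rw [← map_pow, hb, hnorm, hev2k.neg_one_pow, one_mul]
    refine ha l hl (dvd_trans hlm ⟨2^k, hmt⟩) (-(Algebra.norm K b)) ?_
    rw [hlodd.neg_pow, hbn, neg_neg]


lemma bin_count (F : Type u) [Field F] [Fintype F] (t : ℕ) (ht : 0 < t)
    (hdvd : ∀ l : ℕ, l.Prime → l ∣ t → l ∣ (Fintype.card F - 1))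
    (hmod : Even t → Fintype.card F % 4 = 1) :
    Nat.totient (Fintype.card F - 1) ≤ Nbin F t := by
  classical
  set q := Fintype.card F with hqdef
  have hq2 : 2 ≤ q := Fintype.one_lt_card
  have hcardu : Fintype.card Fˣ = q - 1 := by rw [Fintype.card_units]
  have key : ∀ a : Fˣ, orderOf a = q - 1 → Irreducible (X^t - C (a:F)) := by
    intro a haord
    apply bin_irred_main F t ht hmod
    intro l hl hlt b hb
    have hb0 : b ≠ 0 := by
      rintro rfl
      rw [zero_pow hl.ne_zero] at hb
      exact (a.ne_zero) hb.symm
    set u := Units.mk0 b hb0 with hudef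
    have hu : u ^ l = a := by
      apply Units.ext
      simpa [hudef] using hb
    have h1 : orderOf a ∣ orderOf u := by
      rw [← hu]
      exact orderOf_pow_dvd l
    have h2 : orderOf u ∣ q - 1 := by
      rw [← hcardu]
      exact orderOf_dvd_card
    have h3 : orderOf u = q - 1 := Nat.dvd_antisymm h2 (haord ▸ h1)
    have h4 : orderOf (u ^ l) = orderOf u / Nat.gcd (orderOf u) l :=
      orderOf_pow' u hl.ne_zero
    rw [hu, haord, h3] at h4
    have hgcd : Nat.gcd (q-1) l = l := Nat.gcd_eq_right (hdvd l hl hlt)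
    rw [hgcd] at h4
    have hlt2 : (q-1)/l < q-1 := Nat.div_lt_self (by omega) hl.one_lt
    omega
  have hcount : (Finset.univ.filter (fun a : Fˣ => orderOf a = q - 1)).card
      = Nat.totient (q - 1) := by
    have := IsCyclic.card_orderOf_eq_totient (α := Fˣ) (d := q - 1)
      (by rw [hcardu])
    convert this using 2
  have hsub : Nat.card {a : Fˣ // orderOf a = q - 1} ≤ Nbin F t := by
    apply Nat.card_le_card_of_injective
      (fun z : {a : Fˣ // orderOf a = q - 1} =>
        (⟨z.1, key z.1 z.2⟩ : {a : Fˣ // Irreducible (X^t - C (a:F))}))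
    intro z w h
    exact Subtype.ext (by simpa using congrArg Subtype.val h)
  have heq : Nat.card {a : Fˣ // orderOf a = q - 1}
      = (Finset.univ.filter (fun a : Fˣ => orderOf a = q - 1)).card := by
    rw [Nat.card_eq_fintype_card, Fintype.card_subtype]
  omega

lemma bin_fact_apply {s : ℕ} (p : Fin s → ℕ) (hp : ∀ j, (p j).Prime)
    (hinj : Function.Injective p) (x : Fin s → ℕ) (i : Fin s) :
    (∏ j, p j ^ x j).factorization (p i) = x i := by
  rw [Nat.factorization_prod (fun j _ => pow_ne_zero _ (hp j).pos.ne')]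
  rw [Finset.sum_apply']
  have hterm : ∀ j, ((p j ^ x j).factorization) (p i) = if j = i then x i else 0 := by
    intro j
    rw [(hp j).factorization_pow, Finsupp.single_apply]
    by_cases h : j = i
    · subst h; simp
    · rw [if_neg (fun hc => h (hinj hc)), if_neg h]
  rw [Finset.sum_congr rfl (fun j _ => hterm j)]
  simp

lemma bin_phi_inj {s : ℕ} (p : Fin s → ℕ) (hp : ∀ j, (p j).Prime)
    (hinj : Function.Injective p) :
    Function.Injective (fun x : Fin s → ℕ => ∏ j, p j ^ x j) := by
  intro x y h
  funext i
  have hx := bin_fact_apply p hp hinj x i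
  have hy := bin_fact_apply p hp hinj y i
  simp only at h
  rw [h] at hx
  rw [hy] at hx
  exact hx.symm


theorem stmt_16 (q : ℕ) (hq : IsPrimePow q) (hmod : q % 4 ≠ 3)
    (F : Type*) [Field F] [Fintype F] (hcard : Fintype.card F = q)
    (s : ℕ) (hs : 2 ≤ s) (p : Fin s → ℕ) (α : Fin s → ℕ) (hp : ∀ j, (p j).Prime)
    (hinj : Function.Injective p) (hα : ∀ j, 1 ≤ α j)
    (hfac : q - 1 = ∏ j, p j ^ α j) (T : ℕ) (hT : 1 < T) :
    (∑ t ∈ Finset.Icc 1 T, (Nbin F t : ℝ)) >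
      (Nat.totient (q - 1) : ℝ) / ((s.factorial : ℝ) * ∏ j, Real.log (p j)) *
        (Real.log T) ^ s *
        (1 + (s : ℝ) * Real.log ((∏ j, (p j : ℝ)) / (p ⟨0, by omega⟩ : ℝ)) /
          (2 * Real.log T)) := by
  classical
  have hq2 : 2 ≤ q := hq.two_le
  have hp2 : ∀ j, 2 ≤ p j := fun j => (hp j).two_le
  set a : Fin s → ℝ := fun j => Real.log (p j) with hadef
  have ha : ∀ j, 0 < a j := by
    intro j
    apply Real.log_pos
    exact_mod_cast hp2 j
  set A : ℝ := Real.log T with hAdef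
  have hApos : 0 < A := Real.log_pos (by exact_mod_cast hT)
  have hpdvd : ∀ j, p j ∣ q - 1 := by
    intro j
    rw [hfac]
    exact dvd_trans (dvd_pow_self (p j) (by have := hα j; omega))
      (Finset.dvd_prod_of_mem _ (Finset.mem_univ j))
  -- the image of the lattice points
  set Φ : (Fin s → ℕ) → ℕ := fun x => ∏ j, p j ^ x j with hΦdef
  have hΦinj : Function.Injective Φ := bin_phi_inj p hp hinj
  set L : Finset ℕ := (binC s a A).image Φ with hLdef
  have hLsub : L ⊆ Finset.Icc 1 T := by
    intro t htL
    rw [hLdef, Finset.mem_image] at htL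
    obtain ⟨x, hx, rfl⟩ := htL
    rw [bin_mem_binC ha] at hx
    have hpos : 0 < Φ x := Finset.prod_pos (fun j _ => pow_pos (hp j).pos _)
    have hlog : Real.log (Φ x) = ∑ j, (x j : ℝ) * a j := by
      rw [hΦdef]
      push_cast
      rw [Real.log_prod (fun j _ => by
        have := (hp j).pos
        positivity)]
      apply Finset.sum_congr rfl
      intro j _
      rw [Real.log_pow, hadef]
    have hle : (Φ x : ℝ) ≤ (T : ℝ) := by
      rw [← Real.log_le_log_iff (by exact_mod_cast hpos) (by positivity)]
      rw [hlog, ← hAdef]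
      exact hx
    simp only [Finset.mem_Icc]
    exact ⟨hpos, by exact_mod_cast hle⟩
  -- each element of the image contributes at least φ(q-1)
  have hbin : ∀ t ∈ L, Nat.totient (q - 1) ≤ Nbin F t := by
    intro t htL
    rw [hLdef, Finset.mem_image] at htL
    obtain ⟨x, _, rfl⟩ := htL
    have hpos : 0 < Φ x := Finset.prod_pos (fun j _ => pow_pos (hp j).pos _)
    have hprime : ∀ l : ℕ, l.Prime → l ∣ Φ x → ∃ j, l = p j := by
      intro l hl hldvd
      rw [hΦdef] at hldvd
      obtain ⟨j, _, hlj⟩ := (hl.prime.dvd_finset_prod_iff _).mp hldvd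
      exact ⟨j, (Nat.prime_dvd_prime_iff_eq hl (hp j)).mp (hl.dvd_of_dvd_pow hlj)⟩
    have hdvd : ∀ l : ℕ, l.Prime → l ∣ Φ x → l ∣ (Fintype.card F - 1) := by
      intro l hl hldvd
      obtain ⟨j, rfl⟩ := hprime l hl hldvd
      rw [hcard]
      exact hpdvd j
    have hmod' : Even (Φ x) → Fintype.card F % 4 = 1 := by
      intro hev
      obtain ⟨j, h2j⟩ := hprime 2 Nat.prime_two hev.two_dvd
      have h2q : 2 ∣ q - 1 := h2j ▸ hpdvd j
      rw [hcard]
      omega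
    have := bin_count F (Φ x) hpos hdvd hmod'
    rwa [hcard] at this
  -- summation bound, in ℕ
  have hsum : (binC s a A).card * Nat.totient (q - 1) ≤ ∑ t ∈ Finset.Icc 1 T, Nbin F t := by
    calc (binC s a A).card * Nat.totient (q - 1)
        = L.card * Nat.totient (q - 1) := by
          rw [hLdef, Finset.card_image_of_injective _ hΦinj]
      _ = ∑ _t ∈ L, Nat.totient (q - 1) := by rw [Finset.sum_const, smul_eq_mul]
      _ ≤ ∑ t ∈ L, Nbin F t := Finset.sum_le_sum hbin
      _ ≤ ∑ t ∈ Finset.Icc 1 T, Nbin F t := Finset.sum_le_sum_of_subset hLsub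
  -- lattice bound
  have hlat := bin_lattice s (by omega) a ha A hApos.le
  have hphi : 0 < Nat.totient (q - 1) := Nat.totient_pos.mpr (by omega)
  -- identify the sum of logs
  have hS : Real.log ((∏ j, (p j : ℝ)) / (p ⟨0, by omega⟩ : ℝ))
      = ∑ j ∈ Finset.univ.filter (fun j : Fin s => (j:ℕ) ≠ 0), a j := by
    rw [bin_filter_sum (by omega : 0 < s) a]
    rw [Real.log_div
      (ne_of_gt (Finset.prod_pos (fun j _ => by exact_mod_cast (hp j).pos)))
      (Nat.cast_ne_zero.mpr (hp ⟨0, by omega⟩).pos.ne')]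
    rw [Real.log_prod
      (fun j _ => Nat.cast_ne_zero.mpr (hp j).pos.ne' )]
  -- final algebra
  set S : ℝ := ∑ j ∈ Finset.univ.filter (fun j : Fin s => (j:ℕ) ≠ 0), a j with hSdef
  set P : ℝ := ∏ j, a j with hPdef
  have hPpos : 0 < P := Finset.prod_pos (fun j _ => ha j)
  have hfacpos : (0:ℝ) < (s.factorial : ℝ) := by exact_mod_cast s.factorial_pos
  have hRHS : (Nat.totient (q - 1) : ℝ) / ((s.factorial : ℝ) * P) * A ^ s *
        (1 + (s : ℝ) * S / (2 * A))
      = (Nat.totient (q - 1) : ℝ) *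
          ((A^s + (s:ℝ)/2 * A^(s-1) * S) / ((s.factorial : ℝ) * P)) := by
    obtain ⟨k, rfl⟩ : ∃ k, s = k + 1 := ⟨s - 1, by omega⟩
    rw [show k + 1 - 1 = k from rfl]
    field_simp
    ring
  calc (Nat.totient (q - 1) : ℝ) / ((s.factorial : ℝ) * ∏ j, Real.log (p j)) *
        (Real.log T) ^ s *
        (1 + (s : ℝ) * Real.log ((∏ j, (p j : ℝ)) / (p ⟨0, by omega⟩ : ℝ)) /
          (2 * Real.log T))
      = (Nat.totient (q - 1) : ℝ) *
          ((A^s + (s:ℝ)/2 * A^(s-1) * S) / ((s.factorial : ℝ) * P)) := by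
        rw [← hRHS, hS]
      _ < (Nat.totient (q - 1) : ℝ) * ((binC s a A).card : ℝ) := by
        apply mul_lt_mul_of_pos_left _ (by exact_mod_cast hphi)
        exact hlat
      _ ≤ ∑ t ∈ Finset.Icc 1 T, (Nbin F t : ℝ) := by
        rw [← Nat.cast_sum]
        rw [mul_comm]
        exact_mod_cast hsum
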